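/- Let $t > 2$. Then $\int_{(t+1)/2}^{t} \frac{1}{\tau^3 (t - \tau)} \int_{|y| = t - \tau} |t - 2\tau|^{-3} \, d\sigma(y) \, d\tau \leq C t^{-2}$ for a universal constant $C$, where $d\sigma$ denotes the surface measure on the sphere $\{|y| = t - \tau\}$ in $\mathbb{R}^3$ (so the inner integral equals $4\pi (t-\tau)^2 |t-2\tau|^{-3}$). -/

import Mathlib

/-- The Kirchhoff-formula integral bound giving the interior decay rate `t⁻²`. -/
theorem kirchhoff_integral_bound :
    ∃ C > 0, ∀ t : ℝ, 2 < t →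
      (∫ τ in ((t + 1) / 2)..t,
          (1 / (τ ^ 3 * (t - τ))) * (4 * Real.pi * (t - τ) ^ 2 * |t - 2 * τ| ^ (-(3 : ℝ))))
        ≤ C / t ^ 2 := by
  refine ⟨4 * Real.pi, by positivity, fun t ht => ?_⟩
  set a : ℝ := (t + 1) / 2 with ha_def
  have hab : a ≤ t := by simp only [ha_def]; linarith
  have huIcc : Set.uIcc a t = Set.Icc a t := Set.uIcc_of_le hab
  set g : ℝ → ℝ := fun τ => 4 * Real.pi * (t - τ) / (τ ^ 3 * (2 * τ - t) ^ 3) with hg_def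
  set h : ℝ → ℝ := fun τ => 32 * Real.pi * (t - τ) / (t ^ 3 * (2 * τ - t) ^ 3) with hh_def
  have hmem : ∀ τ ∈ Set.Icc a t, 1 ≤ 2 * τ - t ∧ t / 2 < τ ∧ τ ≤ t := by
    intro τ hτ
    obtain ⟨h1, h2⟩ := hτ
    constructor
    · simp only [ha_def] at h1; linarith
    · constructor
      · simp only [ha_def] at h1; linarith
      · exact h2
  -- f = g on the interval
  have hfg : Set.EqOn (fun τ => (1 / (τ ^ 3 * (t - τ))) *
      (4 * Real.pi * (t - τ) ^ 2 * |t - 2 * τ| ^ (-(3 : ℝ)))) g (Set.uIcc a t) := by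
    intro τ hτ
    rw [huIcc] at hτ
    obtain ⟨h1, h2, h3⟩ := hmem τ hτ
    have hτ0 : τ ≠ 0 := by linarith
    have hu0 : 2 * τ - t ≠ 0 := by linarith
    have habs : |t - 2 * τ| ^ (-(3 : ℝ)) = ((2 * τ - t) ^ 3)⁻¹ := by
      rw [abs_of_nonpos (by linarith), show -(t - 2 * τ) = 2 * τ - t by ring,
        Real.rpow_neg (by linarith), show (3 : ℝ) = ((3 : ℕ) : ℝ) by norm_num,
        Real.rpow_natCast]
    simp only [hg_def, habs]
    rcases eq_or_lt_of_le h3 with heq | hlt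
    · subst heq; simp
    · have hts : t - τ ≠ 0 := by linarith
      field_simp
  rw [intervalIntegral.integral_congr hfg]
  -- continuity and integrability
  have hgc : ContinuousOn g (Set.uIcc a t) := by
    apply ContinuousOn.div (by fun_prop)
    · fun_prop
    · intro τ hτ
      rw [huIcc] at hτ
      obtain ⟨h1, h2, _⟩ := hmem τ hτ
      have : (0:ℝ) < τ := by linarith
      positivity
  have hhc : ContinuousOn h (Set.uIcc a t) := by
    apply ContinuousOn.div (by fun_prop)
    · fun_prop
    · intro τ hτ
      rw [huIcc] at hτ
      obtain ⟨h1, _, _⟩ := hmem τ hτ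
      have ht0 : (0:ℝ) < t := by linarith
      positivity
  have hgi : IntervalIntegrable g MeasureTheory.volume a t :=
    hgc.intervalIntegrable
  have hhi : IntervalIntegrable h MeasureTheory.volume a t :=
    hhc.intervalIntegrable
  -- g ≤ h pointwise
  have hle : (∫ τ in a..t, g τ) ≤ ∫ τ in a..t, h τ := by
    apply intervalIntegral.integral_mono_on hab hgi hhi
    intro τ hτ
    obtain ⟨h1, h2, h3⟩ := hmem τ hτ
    have hτ0 : (0:ℝ) < τ := by linarith
    have ht0 : (0:ℝ) < t := by linarith
    have hu0 : (0:ℝ) < 2 * τ - t := by linarith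
    simp only [hg_def, hh_def]
    rw [div_le_div_iff₀ (by positivity) (by positivity)]
    have hπ := Real.pi_pos
    have hts : 0 ≤ t - τ := by linarith
    have h8 : t ^ 3 ≤ 8 * τ ^ 3 := by
      nlinarith [mul_nonneg hu0.le (by positivity : (0:ℝ) ≤ 4 * τ ^ 2 + 2 * τ * t + t ^ 2)]
    nlinarith [mul_nonneg (mul_nonneg (mul_nonneg hπ.le hts) (pow_pos hu0 3).le)
      (sub_nonneg.mpr h8)]
  -- compute ∫ h via antiderivative
  have ht0 : (0:ℝ) < t := by linarith
  set F : ℝ → ℝ := fun τ => 32 * Real.pi / t ^ 3 *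
      ((2 * τ - t)⁻¹ / 4 - t * ((2 * τ - t) ^ 2)⁻¹ / 8) with hF_def
  have hderiv : ∀ τ ∈ Set.uIcc a t, HasDerivAt F (h τ) τ := by
    intro τ hτ
    rw [huIcc] at hτ
    obtain ⟨h1, _, _⟩ := hmem τ hτ
    have hu0 : 2 * τ - t ≠ 0 := by linarith
    have hu : HasDerivAt (fun τ : ℝ => 2 * τ - t) 2 τ := by
      simpa using ((hasDerivAt_id τ).const_mul 2).sub_const t
    have h1' : HasDerivAt (fun τ : ℝ => (2 * τ - t)⁻¹) (-2 / (2 * τ - t) ^ 2) τ := by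
      exact hu.inv hu0
    have h2' := (hu.pow 2).inv (pow_ne_zero 2 hu0)
    have := ((h1'.div_const 4).sub ((h2'.const_mul t).div_const 8)).const_mul
      (32 * Real.pi / t ^ 3)
    refine this.congr_deriv ?_
    simp only [hh_def, Pi.pow_apply]
    field_simp
    ring
  have hint : (∫ τ in a..t, h τ) = F t - F a :=
    intervalIntegral.integral_eq_sub_of_hasDerivAt hderiv hhi
  have hFa : F a = 32 * Real.pi / t ^ 3 * (1 / 4 - t / 8) := by
    simp only [hF_def, ha_def]
    rw [show 2 * ((t + 1) / 2) - t = (1:ℝ) by ring]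
    norm_num
  have hFt : F t = 32 * Real.pi / t ^ 3 * ((t)⁻¹ / 4 - t * ((t) ^ 2)⁻¹ / 8) := by
    simp only [hF_def]
    norm_num [show 2 * t - t = t by ring]
  calc (∫ τ in a..t, g τ) ≤ ∫ τ in a..t, h τ := hle
    _ = F t - F a := hint
    _ ≤ 4 * Real.pi / t ^ 2 := by
        rw [hFa, hFt, ← sub_nonneg]
        have hne : t ≠ 0 := ht0.ne'
        have key : 4 * Real.pi / t ^ 2 -
            (32 * Real.pi / t ^ 3 * (t⁻¹ / 4 - t * (t ^ 2)⁻¹ / 8) -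
              32 * Real.pi / t ^ 3 * (1 / 4 - t / 8)) =
            4 * Real.pi * (2 * t - 1) / t ^ 4 := by
          field_simp
          ring
        rw [key]
        have h2t : (0:ℝ) < 2 * t - 1 := by linarith
        positivity
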